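/- Suppose β=0, rewards are binary r(x,y) ∈ {0,1}, and the value function of π is L-Lipschitz along trajectories: |V(x,y_{1:t-1};π) − V(x,y_{1:t};π)| ≤ L for all reachable states. Let α be the total abstention rate of a(π) and α₁ = P(V(x, empty; π) < r⊥) the immediate-abstention probability. Then J(a(π)) − J(π) ≤ α₁·r⊥ + (α − α₁)·L. -/

import Mathlib

open Finset

attribute [local instance] Classical.propDecidable

variable {V : Type*}

/-- Expected terminal reward (value function) of policy `π` from state `s`
with `n` generation steps remaining; `e` is the end-of-sequence token and
`r` the terminal reward, collected only when `e` is emitted.  States already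
containing `e` are terminal and have value `0`. -/
noncomputable def Vval [Fintype V] (e : V) (r : List V → ℝ)
    (π : List V → V → ℝ) : ℕ → List V → ℝ
  | 0, _ => 0
  | n+1, s =>
      if e ∈ s then 0 else
      ∑ a : V, π s a * (if a = e then r (s ++ [a]) else Vval e r π n (s ++ [a]))

/-- Value of the dynamic value-thresholding policy `a(π)`: at any
non-terminal state whose value under `π` is below the abstention reward
`rb` it abstains and receives `rb`; otherwise it follows `π`. -/
noncomputable def Aval [Fintype V] (e : V) (r : List V → ℝ)
    (π : List V → V → ℝ) (rb : ℝ) : ℕ → List V → ℝ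
  | 0, _ => 0
  | n+1, s =>
      if e ∈ s then 0 else
      if Vval e r π (n+1) s < rb then rb else
      ∑ a : V, π s a * (if a = e then r (s ++ [a]) else Aval e r π rb n (s ++ [a]))

/-- One generation step with positive probability from a non-terminal state. -/
def Step (e : V) (π : List V → V → ℝ) (s s' : List V) : Prop :=
  e ∉ s ∧ ∃ a : V, 0 < π s a ∧ s' = s ++ [a]

/-- `s'` is reachable from `s` with positive probability under `π`. -/
def Reach (e : V) (π : List V → V → ℝ) : List V → List V → Prop :=
  Relation.ReflTransGen (Step e π)

/-- Probability that the dynamic value-thresholding policy `a(π)` abstains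
on a trajectory started from state `s` with `n` steps remaining. -/
noncomputable def Aprob [Fintype V] (e : V) (r : List V → ℝ)
    (π : List V → V → ℝ) (rb : ℝ) : ℕ → List V → ℝ
  | 0, _ => 0
  | n+1, s =>
      if e ∈ s then 0 else
      if Vval e r π (n+1) s < rb then 1 else
      ∑ a : V, π s a * (if a = e then 0 else Aprob e r π rb n (s ++ [a]))

lemma Vval_nonneg [Fintype V] (e : V) (r : List V → ℝ)
    (π : List V → V → ℝ) (hπ0 : ∀ s a, 0 ≤ π s a) (hr : ∀ y, 0 ≤ r y) :
    ∀ n s, 0 ≤ Vval e r π n s := by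
  intro n
  induction n with
  | zero => intro s; simp [Vval]
  | succ m ih =>
    intro s
    rw [Vval]
    split
    · exact le_rfl
    · refine Finset.sum_nonneg fun a _ => mul_nonneg (hπ0 s a) ?_
      split
      · exact hr _
      · exact ih _

lemma key_bound [Fintype V] (e : V) (r : List V → ℝ)
    (π : List V → V → ℝ) (rb L : ℝ) (T : ℕ)
    (hπ0 : ∀ s a, 0 ≤ π s a)
    (hlip : ∀ s, Reach e π [] s → e ∉ s → s.length < T →
        ∀ a : V, 0 < π s a →
          |Vval e r π (T - s.length) s -
            Vval e r π (T - (s.length + 1)) (s ++ [a])| ≤ L) :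
    ∀ n s, Reach e π [] s → e ∉ s → s.length + n = T →
      ¬ Vval e r π n s < rb →
      Aval e r π rb n s - Vval e r π n s ≤ Aprob e r π rb n s * L := by
  intro n
  induction n with
  | zero => intro s _ _ _ _; simp [Aval, Vval, Aprob]
  | succ m ih =>
    intro s hreach hes hlen habst
    rw [Aval, Aprob, if_neg hes, if_neg hes, if_neg habst, if_neg habst,
      Vval, if_neg hes]
    rw [← Finset.sum_sub_distrib, Finset.sum_mul]
    refine Finset.sum_le_sum fun a _ => ?_
    rw [← mul_sub, mul_assoc]
    rcases (hπ0 s a).eq_or_lt with hpa | hpa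
    · rw [← hpa]; simp
    refine mul_le_mul_of_nonneg_left ?_ (hπ0 s a)
    by_cases hae : a = e
    · simp [hae]
    rw [if_neg hae, if_neg hae, if_neg hae]
    have hes' : e ∉ s ++ [a] := by
      simp [List.mem_append]
      exact ⟨hes, fun h => hae h.symm⟩
    have hreach' : Reach e π [] (s ++ [a]) :=
      Relation.ReflTransGen.tail hreach ⟨hes, a, hpa, rfl⟩
    have hlen' : (s ++ [a]).length + m = T := by
      simp [List.length_append]; omega
    by_cases habst' : Vval e r π m (s ++ [a]) < rb
    · cases m with
      | zero => simp [Aval, Vval, Aprob]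
      | succ k =>
        rw [Aval, Aprob, if_neg hes', if_neg hes', if_pos habst', if_pos habst']
        have h1 : T - s.length = (k + 1) + 1 := by omega
        have h2 : T - (s.length + 1) = k + 1 := by omega
        have hl := hlip s hreach hes (by omega) a hpa
        rw [h1, h2] at hl
        have habs := abs_le.mp hl
        push_neg at habst
        rw [one_mul]
        linarith
    · exact ih (s ++ [a]) hreach' hes' hlen' habst'

/-- Linear improvement bound (Proposition 4.10): with `β = 0`, binary
rewards, and an `L`-Lipschitz value function along reachable trajectories,
`J(a(π)) − J(π) ≤ α₁·r⊥ + (α − α₁)·L`, where `α` is the abstention rate of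
`a(π)` and `α₁` the probability of immediate abstention. -/
theorem linear_improvement_bound [Fintype V] {X : Type*} [Fintype X]
    (e : V) (ρ : X → ℝ) (r : X → List V → ℝ)
    (π : X → List V → V → ℝ) (rb L : ℝ) (T : ℕ)
    (hρ0 : ∀ x, 0 ≤ ρ x) (hρ1 : ∑ x, ρ x = 1)
    (hπ0 : ∀ x s a, 0 ≤ π x s a) (hπ1 : ∀ x s, ∑ a : V, π x s a = 1)
    (hbin : ∀ x y, r x y = 0 ∨ r x y = 1)
    (hrb0 : 0 < rb) (hrb1 : rb ≤ 1) (hT : 1 ≤ T)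
    (hlip : ∀ x, 0 < ρ x → ∀ s, Reach e (π x) [] s → e ∉ s → s.length < T →
        ∀ a : V, 0 < π x s a →
          |Vval e (r x) (π x) (T - s.length) s -
            Vval e (r x) (π x) (T - (s.length + 1)) (s ++ [a])| ≤ L) :
    (∑ x, ρ x * Aval e (r x) (π x) rb T []) - (∑ x, ρ x * Vval e (r x) (π x) T [])
      ≤ (∑ x, ρ x * (if Vval e (r x) (π x) T [] < rb then (1:ℝ) else 0)) * rb
        + ((∑ x, ρ x * Aprob e (r x) (π x) rb T [])
            - ∑ x, ρ x * (if Vval e (r x) (π x) T [] < rb then (1:ℝ) else 0)) * L := by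
  obtain ⟨m, rfl⟩ : ∃ m, T = m + 1 := ⟨T - 1, by omega⟩
  rw [Finset.sum_mul, ← Finset.sum_sub_distrib, ← Finset.sum_sub_distrib,
    Finset.sum_mul, ← Finset.sum_add_distrib]
  refine Finset.sum_le_sum fun x _ => ?_
  rcases (hρ0 x).eq_or_lt with hx | hx
  · rw [← hx]; simp
  have hVnn : 0 ≤ Vval e (r x) (π x) (m + 1) [] :=
    Vval_nonneg e (r x) (π x) (hπ0 x)
      (fun y => by rcases hbin x y with h | h <;> rw [h] <;> norm_num) _ _
  by_cases hroot : Vval e (r x) (π x) (m + 1) [] < rb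
  · rw [if_pos hroot]
    have hA : Aval e (r x) (π x) rb (m + 1) [] = rb := by
      rw [Aval, if_neg ((List.not_mem_nil : e ∉ [])), if_pos hroot]
    have hP : Aprob e (r x) (π x) rb (m + 1) [] = 1 := by
      rw [Aprob, if_neg ((List.not_mem_nil : e ∉ [])), if_pos hroot]
    rw [hA, hP]
    nlinarith
  · rw [if_neg hroot]
    have hk := key_bound e (r x) (π x) rb L (m + 1) (hπ0 x)
      (hlip x hx) (m + 1) [] Relation.ReflTransGen.refl
      ((List.not_mem_nil : e ∉ [])) (by simp) hroot
    nlinarith
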